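/- arXiv:2602.23336 — 6 statements merged into one kernel-verified Lean document; each statement's English description precedes it below -/
import Mathlib

section
/- Let n ≥ 1, let k be an integer with 1 ≤ k ≤ n, let x ∈ ℝ^n, and let y = Π_{Δ^n_k}(x). Then the projection is order preserving: for all indices i, j, if x_i ≥ x_j then y_i ≥ y_j. -/
open scoped BigOperators

/-- The (n,k)-dimensional hypersimplex: vectors in [0,1]^n whose coordinates sum to k. -/
def hypersimplex (n : ℕ) (k : ℝ) : Set (EuclideanSpace ℝ (Fin n)) :=
  {y | (∀ i, 0 ≤ y i ∧ y i ≤ 1) ∧ ∑ i, y i = k}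

/-- The Euclidean projection y = Π_{Δ^n_k}(x) is order preserving: if x_i ≥ x_j
then y_i ≥ y_j. -/
theorem hypersimplex_proj_order_preserving (n : ℕ) (hn : 1 ≤ n) (k : ℕ)
    (hk1 : 1 ≤ k) (hk2 : k ≤ n)
    (x y : EuclideanSpace ℝ (Fin n))
    (hy : y ∈ hypersimplex n (k : ℝ) ∧
      ∀ z ∈ hypersimplex n (k : ℝ), ‖x - y‖ ≤ ‖x - z‖) :
    ∀ i j : Fin n, x j ≤ x i → y j ≤ y i := by
  intro i j hxji
  by_contra hlt
  push_neg at hlt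
  have hij : i ≠ j := by rintro rfl; exact lt_irrefl _ hlt
  obtain ⟨⟨hbd, hsum⟩, hmin⟩ := hy
  set m : ℝ := (y i + y j) / 2 with hm
  set w : EuclideanSpace ℝ (Fin n) := WithLp.toLp 2 (fun l => if l = i then m else if l = j then m else y l)
    with hw
  have hwl : ∀ l, w l = if l = i then m else if l = j then m else y l := fun l => rfl
  have hm0 : 0 ≤ m := by
    have := (hbd i).1; have := (hbd j).1; simp only [hm]; linarith
  have hm1 : m ≤ 1 := by
    have := (hbd i).2; have := (hbd j).2; simp only [hm]; linarith
  have hwmem : w ∈ hypersimplex n (k : ℝ) := by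
    constructor
    · intro l
      rw [hwl]
      split_ifs with h1 h2
      · exact ⟨hm0, hm1⟩
      · exact ⟨hm0, hm1⟩
      · exact hbd l
    · have hdiff : ∑ l, (w l - y l) = 0 := by
        have heq : (fun l => w l - y l) =
            (fun l => (if l = i then m - y i else 0) + (if l = j then m - y j else 0)) := by
          funext l
          rw [hwl]
          by_cases h1 : l = i
          · subst h1
            simp [hij]
          · by_cases h2 : l = j
            · subst h2; simp [h1]
            · simp [h1, h2]
        rw [heq, Finset.sum_add_distrib]
        simp only [Finset.sum_ite_eq', Finset.mem_univ, if_true]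
        simp only [hm]; ring
      have : ∑ l, w l = ∑ l, y l := by
        have := Finset.sum_sub_distrib (f := fun l => w l) (g := fun l => y l)
          (s := (Finset.univ : Finset (Fin n)))
        rw [this] at hdiff
        linarith
      rw [this, hsum]
  have hle := hmin w hwmem
  have hsq : ‖x - y‖ ^ 2 ≤ ‖x - w‖ ^ 2 := by
    exact pow_le_pow_left₀ (norm_nonneg _) hle 2
  have hnormy : ‖x - y‖ ^ 2 = ∑ l, (x l - y l) ^ 2 := by
    rw [EuclideanSpace.norm_eq, Real.sq_sqrt (by positivity)]
    congr 1; funext l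
    simp [Real.norm_eq_abs, sq_abs]
  have hnormw : ‖x - w‖ ^ 2 = ∑ l, (x l - w l) ^ 2 := by
    rw [EuclideanSpace.norm_eq, Real.sq_sqrt (by positivity)]
    congr 1; funext l
    simp [Real.norm_eq_abs, sq_abs]
  rw [hnormy, hnormw] at hsq
  -- split sums at i and j
  have hjmem : j ∈ (Finset.univ : Finset (Fin n)).erase i := by
    simp [Ne.symm hij]
  have splity : ∑ l, (x l - y l) ^ 2 =
      (x i - y i) ^ 2 + ((x j - y j) ^ 2 +
        ∑ l ∈ (Finset.univ.erase i).erase j, (x l - y l) ^ 2) := by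
    rw [← Finset.add_sum_erase _ _ (Finset.mem_univ i),
      ← Finset.add_sum_erase _ _ hjmem]
  have splitw : ∑ l, (x l - w l) ^ 2 =
      (x i - m) ^ 2 + ((x j - m) ^ 2 +
        ∑ l ∈ (Finset.univ.erase i).erase j, (x l - y l) ^ 2) := by
    rw [← Finset.add_sum_erase _ _ (Finset.mem_univ i),
      ← Finset.add_sum_erase _ (fun l => (x l - w l)^2) hjmem]
    have hwi : w i = m := by rw [hwl]; simp
    have hwj : w j = m := by rw [hwl]; simp [hij.symm]
    rw [hwi, hwj]
    congr 1
    congr 1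
    apply Finset.sum_congr rfl
    intro l hl
    have h1 : l ≠ j := (Finset.mem_erase.mp hl).1
    have h2 : l ≠ i := (Finset.mem_erase.mp (Finset.mem_erase.mp hl).2).1
    rw [hwl]
    simp [h1, h2]
  rw [splity, splitw] at hsq
  have key : (x i - y i) ^ 2 + (x j - y j) ^ 2 ≤ (x i - m) ^ 2 + (x j - m) ^ 2 := by
    linarith
  have hd : y i < y j := hlt
  simp only [hm] at key
  nlinarith [key, hd, hxji, sq_nonneg (y j - y i)]
end

section
/- Let n ≥ 1, let k be an integer with 1 ≤ k ≤ n, and let x ∈ ℝ^n. Then there exists λ ∈ ℝ such that the Euclidean projection y = Π_{Δ^n_k}(x) satisfies y_i = min(max(x_i − λ, 0), 1) for every index i, and ∑_i min(max(x_i − λ, 0), 1) = k. -/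
open scoped BigOperators

/-- There exists λ ∈ ℝ such that the Euclidean projection y = Π_{Δ^n_k}(x) satisfies
y_i = clip(x_i − λ, 0, 1) for every i, and the clipped values sum to k. -/
theorem hypersimplex_proj_clip_form (n : ℕ) (hn : 1 ≤ n) (k : ℕ)
    (hk1 : 1 ≤ k) (hk2 : k ≤ n)
    (x y : EuclideanSpace ℝ (Fin n))
    (hy : y ∈ hypersimplex n (k : ℝ) ∧
      ∀ z ∈ hypersimplex n (k : ℝ), ‖x - y‖ ≤ ‖x - z‖) :
    ∃ lam : ℝ, (∀ i, y i = min (max (x i - lam) 0) 1) ∧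
      ∑ i, min (max (x i - lam) 0) 1 = (k : ℝ) := by
  classical
  haveI hne : Nonempty (Fin n) := Fin.pos_iff_nonempty.mp hn
  obtain ⟨⟨hybd, hysum⟩, hymin⟩ := hy
  set g : ℝ → ℝ := fun lam => ∑ i, min (max (x i - lam) 0) 1 with hgdef
  have hcont : Continuous g := by
    apply continuous_finset_sum
    intro i _
    exact ((continuous_const.sub continuous_id).max continuous_const).min continuous_const
  set A : ℝ := (Finset.univ.inf' Finset.univ_nonempty fun i => x i) - 1 with hAdef
  set B : ℝ := Finset.univ.sup' Finset.univ_nonempty fun i => x i with hBdef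
  have hgA : g A = n := by
    have h1 : ∀ i, min (max (x i - A) 0) 1 = 1 := by
      intro i
      have h2 : (Finset.univ.inf' Finset.univ_nonempty fun i => x i) ≤ x i :=
        Finset.inf'_le _ (Finset.mem_univ i)
      have h3 : (1:ℝ) ≤ x i - A := by rw [hAdef]; linarith
      rw [max_eq_left (by linarith), min_eq_right h3]
    simp [hgdef, h1, Finset.card_univ]
  have hgB : g B = 0 := by
    have h1 : ∀ i, min (max (x i - B) 0) 1 = 0 := by
      intro i
      have h2 : x i ≤ B := Finset.le_sup' _ (Finset.mem_univ i)
      rw [max_eq_right (by linarith), min_eq_left zero_le_one]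
    simp [hgdef, h1]
  have hAB : A ≤ B := by
    obtain ⟨i⟩ := id hne
    have h2 : (Finset.univ.inf' Finset.univ_nonempty fun i => x i) ≤ x i :=
      Finset.inf'_le _ (Finset.mem_univ i)
    have h3 : x i ≤ B := Finset.le_sup' _ (Finset.mem_univ i)
    rw [hAdef]; linarith
  have hkmem : (k:ℝ) ∈ Set.Icc (g B) (g A) := by
    rw [hgA, hgB]
    constructor
    · positivity
    · exact_mod_cast hk2
  obtain ⟨lam, -, hlam⟩ := intermediate_value_Icc' hAB hcont.continuousOn hkmem
  -- hlam : g lam = k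
  set y' : EuclideanSpace ℝ (Fin n) := WithLp.toLp 2 (fun i => min (max (x i - lam) 0) 1) with hy'def
  have hy'mem : y' ∈ hypersimplex n (k:ℝ) := by
    refine ⟨fun i => ⟨le_min (le_max_right _ _) zero_le_one, min_le_right _ _⟩, hlam⟩
  -- variational inequality
  have hkey : ∀ z ∈ hypersimplex n (k:ℝ),
      (inner ℝ (x - y') (z - y') : ℝ) ≤ 0 := by
    rintro z ⟨hzbd, hzsum⟩
    have hinner : (inner ℝ (x - y') (z - y') : ℝ)
        = ∑ i, (x i - y' i) * (z i - y' i) := by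
      rw [PiLp.inner_apply]
      refine Finset.sum_congr rfl fun i _ => ?_
      simp [RCLike.inner_apply]
      ring
    rw [hinner]
    have hsum0 : ∑ i, (z i - y' i) = 0 := by
      rw [Finset.sum_sub_distrib, hzsum]
      have : ∑ i, y' i = (k:ℝ) := hlam
      rw [this, sub_self]
    have hsplit : ∑ i, (x i - y' i) * (z i - y' i)
        = lam * ∑ i, (z i - y' i) + ∑ i, (x i - lam - y' i) * (z i - y' i) := by
      rw [Finset.mul_sum, ← Finset.sum_add_distrib]
      exact Finset.sum_congr rfl fun i _ => by ring
    rw [hsplit, hsum0, mul_zero, zero_add]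
    apply Finset.sum_nonpos
    intro i _
    rcases lt_or_ge (x i - lam) 0 with h | h
    · have hyi : y' i = 0 := by
        rw [hy'def]; simp only []
        rw [max_eq_right h.le, min_eq_left zero_le_one]
      rw [hyi]
      have := (hzbd i).1
      nlinarith
    · rcases le_or_gt (x i - lam) 1 with h1 | h1
      · have hyi : y' i = x i - lam := by
          rw [hy'def]; simp only []
          rw [max_eq_left h, min_eq_left h1]
        rw [hyi]
        ring_nf
        simp
      · have hyi : y' i = 1 := by
          rw [hy'def]; simp only []
          rw [max_eq_left (by linarith), min_eq_right h1.le]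
        rw [hyi]
        have := (hzbd i).2
        nlinarith
  -- y' is a projection; uniqueness gives y = y'
  have hy'min : ∀ z ∈ hypersimplex n (k:ℝ), ‖x - y'‖ ≤ ‖x - z‖ := by
    intro z hz
    have h := hkey z hz
    have hnorm : ‖x - z‖^2 = ‖x - y'‖^2 - 2 * (inner ℝ (x - y') (z - y') : ℝ) + ‖z - y'‖^2 := by
      have : x - z = (x - y') - (z - y') := by abel
      rw [this, norm_sub_sq_real]
    nlinarith [norm_nonneg (x - z), norm_nonneg (x - y'), sq_nonneg ‖z - y'‖]
  have hyy' : y = y' := by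
    have h1 : ‖x - y‖ ≤ ‖x - y'‖ := hymin y' hy'mem
    have h2 := hkey y ⟨hybd, hysum⟩
    have hnorm : ‖x - y‖^2 = ‖x - y'‖^2 - 2 * (inner ℝ (x - y') (y - y') : ℝ) + ‖y - y'‖^2 := by
      have : x - y = (x - y') - (y - y') := by abel
      rw [this, norm_sub_sq_real]
    have h3 : ‖y - y'‖^2 ≤ 0 := by nlinarith [norm_nonneg (x - y), norm_nonneg (x - y')]
    have h4 : ‖y - y'‖ = 0 := by nlinarith [norm_nonneg (y - y')]
    exact sub_eq_zero.mp (norm_eq_zero.mp h4)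
  exact ⟨lam, fun i => by rw [hyy'], hlam⟩
end

section
/- Let n ≥ 1, let k be an integer with 1 ≤ k ≤ n, and suppose x ∈ ℝ^n has nonincreasing coordinates, i.e., x_1 ≥ x_2 ≥ ⋯ ≥ x_n. Then the Euclidean projection of x onto Δ^n_k coincides with the unique minimizer of ‖x − y‖₂² over the set {y ∈ ℝ^n : 0 ≤ y_i ≤ 1 for all i, ∑_i y_i = k, and y_1 ≥ y_2 ≥ ⋯ ≥ y_n}; that is, adding the monotonicity constraint does not change the solution. -/
open scoped BigOperators

lemma euclid_normsq {n : ℕ} (a : EuclideanSpace ℝ (Fin n)) :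
    ‖a‖ ^ 2 = ∑ i, (a i) ^ 2 := by
  rw [EuclideanSpace.norm_eq, Real.sq_sqrt (by positivity)]
  simp [Real.norm_eq_abs, sq_abs]

/-- Uniqueness of the projection onto the (convex) hypersimplex. -/
lemma hypersimplex_proj_unique {n : ℕ} {k : ℝ}
    (x y : EuclideanSpace ℝ (Fin n))
    (hy : y ∈ hypersimplex n k ∧
      ∀ z ∈ hypersimplex n k, ‖x - y‖ ≤ ‖x - z‖)
    (z : EuclideanSpace ℝ (Fin n)) (hz : z ∈ hypersimplex n k)
    (hle : ‖x - z‖ ≤ ‖x - y‖) : z = y := by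
  set m : EuclideanSpace ℝ (Fin n) := (2⁻¹ : ℝ) • (y + z) with hm
  have hmem : m ∈ hypersimplex n k := by
    constructor
    · intro i
      have h1 := hy.1.1 i
      have h2 := hz.1 i
      have : m i = (y i + z i) / 2 := by
        simp [hm, PiLp.smul_apply, PiLp.add_apply]
        ring
      rw [this]
      constructor <;> linarith [h1.1, h1.2, h2.1, h2.2]
    · have : ∑ i, m i = (∑ i, y i + ∑ i, z i) / 2 := by
        rw [← Finset.sum_add_distrib, Finset.sum_div]
        apply Finset.sum_congr rfl
        intro i _
        simp [hm, PiLp.smul_apply, PiLp.add_apply]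
        ring
      rw [this, hy.1.2, hz.2]
      ring
  have hmle : ‖x - y‖ ≤ ‖x - m‖ := hy.2 m hmem
  have hpar := parallelogram_law_with_norm ℝ (x - y) (x - z)
  have hsum : (x - y) + (x - z) = (2 : ℝ) • (x - m) := by
    simp [hm]
    module
  have hdiff : (x - y) - (x - z) = z - y := by abel
  rw [hsum, hdiff, norm_smul] at hpar
  simp only [Real.norm_ofNat] at hpar
  have h0 : ‖z - y‖ = 0 := by
    nlinarith [norm_nonneg (z - y), norm_nonneg (x - y), norm_nonneg (x - z),
      norm_nonneg (x - m)]
  have := norm_eq_zero.mp h0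
  rwa [sub_eq_zero] at this

/-- If x has nonincreasing coordinates, then the Euclidean projection of x onto
Δ^n_k coincides with the unique minimizer of ‖x − y‖² over the monotone subset
{y ∈ Δ^n_k : y_1 ≥ ⋯ ≥ y_n}: adding the monotonicity constraint does not change
the solution. -/
theorem hypersimplex_proj_isotonic (n : ℕ) (hn : 1 ≤ n) (k : ℕ)
    (hk1 : 1 ≤ k) (hk2 : k ≤ n)
    (x : EuclideanSpace ℝ (Fin n)) (hx : ∀ i j : Fin n, i ≤ j → x j ≤ x i)
    (y : EuclideanSpace ℝ (Fin n))
    (hy : y ∈ hypersimplex n (k : ℝ) ∧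
      ∀ z ∈ hypersimplex n (k : ℝ), ‖x - y‖ ≤ ‖x - z‖) :
    (∀ i j : Fin n, i ≤ j → y j ≤ y i) ∧
    (∀ z ∈ hypersimplex n (k : ℝ), (∀ i j : Fin n, i ≤ j → z j ≤ z i) →
      ‖x - y‖ ^ 2 ≤ ‖x - z‖ ^ 2) ∧
    (∀ z ∈ hypersimplex n (k : ℝ), (∀ i j : Fin n, i ≤ j → z j ≤ z i) →
      (∀ w ∈ hypersimplex n (k : ℝ), (∀ i j : Fin n, i ≤ j → w j ≤ w i) →
        ‖x - z‖ ^ 2 ≤ ‖x - w‖ ^ 2) → z = y) := by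
  have hmono : ∀ i j : Fin n, i ≤ j → y j ≤ y i := by
    intro i j hij
    by_contra hcon
    push_neg at hcon
    have hne : i ≠ j := by
      rintro rfl; exact lt_irrefl _ hcon
    -- the swapped vector
    set z : EuclideanSpace ℝ (Fin n) := WithLp.toLp 2 (fun l => y (Equiv.swap i j l)) with hzdef
    have hz : z ∈ hypersimplex n (k : ℝ) := by
      constructor
      · intro l; exact hy.1.1 _
      · rw [← hy.1.2]
        exact Fintype.sum_equiv (Equiv.swap i j) _ _ (fun l => rfl)
    -- ‖x - z‖² ≤ ‖x - y‖²
    have hzi : z i = y j := by simp only [hzdef]; rw [Equiv.swap_apply_left]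
    have hzj : z j = y i := by simp only [hzdef]; rw [Equiv.swap_apply_right]
    have hsq : ‖x - z‖ ^ 2 ≤ ‖x - y‖ ^ 2 := by
      rw [euclid_normsq, euclid_normsq]
      have heq : ∀ l ∈ Finset.univ \ {i, j},
          ((x - z) l) ^ 2 = ((x - y) l) ^ 2 := by
        intro l hl
        simp only [Finset.mem_sdiff, Finset.mem_insert, Finset.mem_singleton] at hl
        push_neg at hl
        have : z l = y l := by
          simp only [hzdef]; rw [Equiv.swap_apply_of_ne_of_ne hl.2.1 hl.2.2]
        simp [PiLp.sub_apply, this]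
      have hsplit : ∀ w : EuclideanSpace ℝ (Fin n),
          ∑ l, ((x - w) l) ^ 2 =
            ((x - w) i) ^ 2 + ((x - w) j) ^ 2 +
              ∑ l ∈ Finset.univ \ {i, j}, ((x - w) l) ^ 2 := by
        intro w
        rw [← Finset.sum_sdiff (Finset.subset_univ ({i, j} : Finset (Fin n)))]
        rw [Finset.sum_pair hne]
        ring
      rw [hsplit z, hsplit y, Finset.sum_congr rfl heq]
      have hxij : x j ≤ x i := hx i j hij
      simp only [PiLp.sub_apply, hzi, hzj]
      nlinarith [hcon, hxij]
    have hle : ‖x - z‖ ≤ ‖x - y‖ := by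
      have h1 : (0:ℝ) ≤ ‖x - z‖ := norm_nonneg _
      have h2 : (0:ℝ) ≤ ‖x - y‖ := norm_nonneg _
      nlinarith
    have := hypersimplex_proj_unique x y hy z hz hle
    have : z i = y i := by rw [this]
    rw [hzi] at this
    exact absurd this (ne_of_gt hcon)
  refine ⟨hmono, ?_, ?_⟩
  · intro z hz _
    have := hy.2 z hz
    have h1 : (0:ℝ) ≤ ‖x - y‖ := norm_nonneg _
    nlinarith
  · intro z hz hzmono hzmin
    have h1 : ‖x - z‖ ^ 2 ≤ ‖x - y‖ ^ 2 := hzmin y hy.1 hmono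
    have hle : ‖x - z‖ ≤ ‖x - y‖ := by
      have h2 : (0:ℝ) ≤ ‖x - z‖ := norm_nonneg _
      have h3 : (0:ℝ) ≤ ‖x - y‖ := norm_nonneg _
      nlinarith
    exact hypersimplex_proj_unique x y hy z hz hle
end

section
/- Let n ≥ 1, let k be an integer with 1 ≤ k ≤ n, and let x ∈ ℝ^n have pairwise distinct coordinates. Then the soft projection recovers the hard binary-argmax@k in the zero-temperature limit: Π_{Δ^n_k}(x/τ) → r_k(x) as τ → 0⁺, where r_k(x) is the indicator vector of the k largest coordinates of x. -/
open scoped BigOperators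

/-- In the zero-temperature limit, the soft projection recovers the hard
binary-argmax@k: Π_{Δ^n_k}(x/τ) → r_k(x) as τ → 0⁺, where r_k(x) is the
indicator vector of the k largest coordinates of x (assumed pairwise distinct).
Here P τ is the Euclidean projection of x/τ onto the hypersimplex. -/
theorem soft_binary_argmax_zero_temperature_limit (n : ℕ) (hn : 1 ≤ n) (k : ℕ)
    (hk1 : 1 ≤ k) (hk2 : k ≤ n)
    (x : EuclideanSpace ℝ (Fin n)) (hx : Function.Injective x)
    (S : Finset (Fin n)) (hScard : S.card = k)
    (hStop : ∀ i ∈ S, ∀ j ∉ S, x j < x i)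
    (r : EuclideanSpace ℝ (Fin n))
    (hr : ∀ i, r i = if i ∈ S then 1 else 0)
    (P : ℝ → EuclideanSpace ℝ (Fin n))
    (hP : ∀ τ : ℝ, 0 < τ → P τ ∈ hypersimplex n (k : ℝ) ∧
      ∀ y ∈ hypersimplex n (k : ℝ), ‖τ⁻¹ • x - P τ‖ ≤ ‖τ⁻¹ • x - y‖) :
    Filter.Tendsto P (nhdsWithin 0 (Set.Ioi 0)) (nhds r) := by
  classical
  -- S is nonempty
  have hSne : S.Nonempty := Finset.card_pos.mp (by omega)
  -- the minimum of x over S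
  set a : ℝ := (S.image x).min' (hSne.image x) with ha_def
  have ha : ∀ i ∈ S, a ≤ x i := fun i hi =>
    Finset.min'_le _ _ (Finset.mem_image_of_mem x hi)
  have ha_mem : ∃ i ∈ S, x i = a := by
    obtain ⟨i, hi, hxi⟩ := Finset.mem_image.mp ((S.image x).min'_mem (hSne.image x))
    exact ⟨i, hi, hxi⟩
  -- a strict upper bound on x over Sᶜ
  obtain ⟨b, hb, hba⟩ : ∃ b : ℝ, (∀ j ∈ Sᶜ, x j ≤ b) ∧ b < a := by
    rcases Sᶜ.eq_empty_or_nonempty with h | h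
    · exact ⟨a - 1, by simp [h], by linarith⟩
    · refine ⟨(Sᶜ.image x).max' (h.image x),
        fun j hj => Finset.le_max' _ _ (Finset.mem_image_of_mem x hj), ?_⟩
      obtain ⟨j, hj, hxj⟩ := Finset.mem_image.mp ((Sᶜ.image x).max'_mem (h.image x))
      obtain ⟨i, hi, hxi⟩ := ha_mem
      rw [← hxj, ← hxi]
      exact hStop i hi j (Finset.mem_compl.mp hj)
  set δ : ℝ := a - b with hδ_def
  have hδ : 0 < δ := by simp only [hδ_def]; linarith
  -- r is in the hypersimplex
  have hrmem : r ∈ hypersimplex n (k : ℝ) := by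
    constructor
    · intro i
      rw [hr]
      by_cases h : i ∈ S <;> simp [h]
    · have : ∑ i, r i = ∑ i, (if i ∈ S then (1:ℝ) else 0) :=
        Finset.sum_congr rfl fun i _ => hr i
      rw [this, Finset.sum_ite_mem, Finset.univ_inter, Finset.sum_const, hScard,
        nsmul_eq_mul, mul_one]
  -- the key bound for each τ > 0
  have key : ∀ τ : ℝ, 0 < τ → dist (P τ) r ≤ Real.sqrt (τ * k / δ) := by
    intro τ hτ
    obtain ⟨⟨hy01, hysum⟩, hopt⟩ := hP τ hτ
    set y : EuclideanSpace ℝ (Fin n) := P τ with hy_def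
    -- sum splitting
    have hsplit : ∑ i ∈ S, y i + ∑ i ∈ Sᶜ, y i = (k : ℝ) := by
      rw [Finset.sum_add_sum_compl]; exact hysum
    have h1 : ∑ i ∈ Sᶜ, y i = ∑ i ∈ S, (1 - y i) := by
      have : ∑ i ∈ S, (1 - y i) = (k : ℝ) - ∑ i ∈ S, y i := by
        rw [Finset.sum_sub_distrib, Finset.sum_const, hScard, nsmul_eq_mul, mul_one]
      linarith
    -- linear gap inequality
    have e : ∑ i, x i * (r i - y i)
        = ∑ i ∈ S, x i * (1 - y i) - ∑ i ∈ Sᶜ, x i * y i := by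
      rw [← Finset.sum_add_sum_compl S (fun i => x i * (r i - y i))]
      have eA : ∑ i ∈ S, x i * (r i - y i) = ∑ i ∈ S, x i * (1 - y i) :=
        Finset.sum_congr rfl fun i hi => by rw [hr]; simp [hi]
      have eB : ∑ i ∈ Sᶜ, x i * (r i - y i) = -∑ i ∈ Sᶜ, x i * y i := by
        rw [← Finset.sum_neg_distrib]
        refine Finset.sum_congr rfl fun i hi => ?_
        rw [hr]; simp [Finset.mem_compl.mp hi]
      rw [eA, eB]; ring
    have hA : a * ∑ i ∈ S, (1 - y i) ≤ ∑ i ∈ S, x i * (1 - y i) := by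
      rw [Finset.mul_sum]
      exact Finset.sum_le_sum fun i hi =>
        mul_le_mul_of_nonneg_right (ha i hi) (by linarith [(hy01 i).2])
    have hB : ∑ i ∈ Sᶜ, x i * y i ≤ b * ∑ i ∈ Sᶜ, y i := by
      rw [Finset.mul_sum]
      exact Finset.sum_le_sum fun i hi =>
        mul_le_mul_of_nonneg_right (hb i hi) ((hy01 i).1)
    have hA' : a * ∑ i ∈ Sᶜ, y i ≤ ∑ i ∈ S, x i * (1 - y i) := by rw [h1]; exact hA
    have h2 : δ * ∑ i ∈ Sᶜ, y i ≤ ∑ i, x i * (r i - y i) := by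
      have expand : δ * ∑ i ∈ Sᶜ, y i
          = a * ∑ i ∈ Sᶜ, y i - b * ∑ i ∈ Sᶜ, y i := by rw [hδ_def]; ring
      rw [e, expand]; linarith
    -- quadratic bound by the ℓ¹ distance
    have h3 : ∑ i, (y i - r i) ^ 2 ≤ 2 * ∑ i ∈ Sᶜ, y i := by
      have hterm : ∀ i, (y i - r i) ^ 2 ≤ if i ∈ S then 1 - y i else y i := by
        intro i
        by_cases h : i ∈ S
        · rw [hr]; simp only [h, if_pos]
          nlinarith [(hy01 i).1, (hy01 i).2]
        · rw [hr]; simp only [h, if_neg, if_false]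
          nlinarith [(hy01 i).1, (hy01 i).2]
      calc ∑ i, (y i - r i) ^ 2 ≤ ∑ i, (if i ∈ S then 1 - y i else y i) :=
            Finset.sum_le_sum fun i _ => hterm i
        _ = ∑ i ∈ S, (1 - y i) + ∑ i ∈ Sᶜ, y i := by
            rw [← Finset.sum_add_sum_compl S]
            congr 1
            · exact Finset.sum_congr rfl fun i hi => if_pos hi
            · exact Finset.sum_congr rfl fun i hi => if_neg (Finset.mem_compl.mp hi)
        _ = 2 * ∑ i ∈ Sᶜ, y i := by rw [← h1]; ring
    -- projection optimality gives the inner product bound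
    have hproj := hopt r hrmem
    have hsq : ‖τ⁻¹ • x - y‖ ^ 2 ≤ ‖τ⁻¹ • x - r‖ ^ 2 :=
      pow_le_pow_left₀ (norm_nonneg _) hproj 2
    rw [norm_sub_sq_real, norm_sub_sq_real] at hsq
    have hi1 : (inner ℝ (τ⁻¹ • x) y : ℝ) = τ⁻¹ * inner ℝ x y := real_inner_smul_left x y τ⁻¹
    have hi2 : (inner ℝ (τ⁻¹ • x) r : ℝ) = τ⁻¹ * inner ℝ x r := real_inner_smul_left x r τ⁻¹
    have hnr : ‖r‖ ^ 2 = (k : ℝ) := by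
      rw [← real_inner_self_eq_norm_sq]
      rw [PiLp.inner_apply]
      have : ∑ i, r i * r i = ∑ i, r i := by
        refine Finset.sum_congr rfl fun i _ => ?_
        rw [hr]; by_cases h : i ∈ S <;> simp [h]
      simp only [RCLike.inner_apply, conj_trivial]
      rw [this, hrmem.2]
    have hnp : 0 ≤ ‖y‖ ^ 2 := sq_nonneg _
    have hinner : (inner ℝ x r : ℝ) - inner ℝ x y ≤ τ * k / 2 := by
      have h4 : τ⁻¹ * ((inner ℝ x r : ℝ) - inner ℝ x y) ≤ (k : ℝ) / 2 := by
        rw [hi1, hi2] at hsq; nlinarith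
      rw [inv_mul_le_iff₀ hτ] at h4
      linarith
    have hinner' : ∑ i, x i * (r i - y i) ≤ τ * k / 2 := by
      have : (inner ℝ x r : ℝ) - inner ℝ x y = ∑ i, x i * (r i - y i) := by
        rw [PiLp.inner_apply, PiLp.inner_apply]
        simp only [RCLike.inner_apply, conj_trivial]
        rw [← Finset.sum_sub_distrib]
        exact Finset.sum_congr rfl fun i _ => by ring
      linarith [this ▸ hinner]
    -- combine
    have hfinal : ∑ i, (y i - r i) ^ 2 ≤ τ * k / δ := by
      have hQ : ∑ i ∈ Sᶜ, y i ≤ (τ * k / 2) / δ := by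
        rw [le_div_iff₀ hδ]
        calc (∑ i ∈ Sᶜ, y i) * δ = δ * ∑ i ∈ Sᶜ, y i := by ring
          _ ≤ ∑ i, x i * (r i - y i) := h2
          _ ≤ τ * k / 2 := hinner'
      calc ∑ i, (y i - r i) ^ 2 ≤ 2 * ∑ i ∈ Sᶜ, y i := h3
        _ ≤ 2 * ((τ * k / 2) / δ) := by linarith
        _ = τ * k / δ := by field_simp
    rw [EuclideanSpace.dist_eq]
    refine Real.sqrt_le_sqrt ?_
    have hd : ∑ i, dist (P τ i) (r i) ^ 2 = ∑ i, (y i - r i) ^ 2 :=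
      Finset.sum_congr rfl fun i _ => by rw [Real.dist_eq, sq_abs]
    rw [hd]; exact hfinal
  -- conclude via squeeze
  rw [tendsto_iff_dist_tendsto_zero]
  apply squeeze_zero' (Filter.Eventually.of_forall fun τ => dist_nonneg)
  · filter_upwards [self_mem_nhdsWithin] with τ hτ
    exact key τ hτ
  · have h0 : Filter.Tendsto (fun τ : ℝ => τ * k / δ) (nhdsWithin 0 (Set.Ioi 0)) (nhds 0) := by
      have : Filter.Tendsto (fun τ : ℝ => τ * k / δ) (nhds 0) (nhds (0 * k / δ)) := by
        exact (Filter.tendsto_id.mul_const _).div_const _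
      simpa using this.mono_left nhdsWithin_le_nhds
    have := (Real.continuous_sqrt.tendsto' 0 0 (by simp)).comp h0
    exact this
end

section
/- Let n ≥ 1, let k be an integer with 1 ≤ k ≤ n, and let x ∈ ℝ^n. Set c = (∑_{i=1}^n x_i − k)/n. If 0 < x_i − c < 1 for every index i, then the Euclidean projection of x onto Δ^n_k is given coordinatewise by Π_{Δ^n_k}(x)_i = x_i − c. -/
open scoped BigOperators

/-- Set c = (∑ x_i − k)/n.  If 0 < x_i − c < 1 for every i, then the Euclidean
projection of x onto Δ^n_k is given coordinatewise by y_i = x_i − c. -/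
theorem hypersimplex_proj_interior_formula (n : ℕ) (hn : 1 ≤ n) (k : ℕ)
    (hk1 : 1 ≤ k) (hk2 : k ≤ n)
    (x : EuclideanSpace ℝ (Fin n))
    (hx : ∀ i, 0 < x i - (∑ j, x j - (k : ℝ)) / (n : ℝ) ∧
      x i - (∑ j, x j - (k : ℝ)) / (n : ℝ) < 1)
    (y : EuclideanSpace ℝ (Fin n))
    (hy : y ∈ hypersimplex n (k : ℝ) ∧
      ∀ z ∈ hypersimplex n (k : ℝ), ‖x - y‖ ≤ ‖x - z‖) :
    ∀ i, y i = x i - (∑ j, x j - (k : ℝ)) / (n : ℝ) := by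
  have hn0 : (n : ℝ) ≠ 0 := by
    exact_mod_cast Nat.one_le_iff_ne_zero.mp hn
  set c : ℝ := (∑ j, x j - (k : ℝ)) / (n : ℝ) with hc
  set p : EuclideanSpace ℝ (Fin n) := WithLp.toLp 2 (fun i => x i - c) with hp
  have hpsum : ∑ i, p i = (k : ℝ) := by
    simp only [hp, PiLp.toLp_apply, Finset.sum_sub_distrib, Finset.sum_const, Finset.card_univ,
      Fintype.card_fin, nsmul_eq_mul, hc]
    field_simp
    ring
  have hpmem : p ∈ hypersimplex n (k : ℝ) :=
    ⟨fun i => ⟨(hx i).1.le, (hx i).2.le⟩, hpsum⟩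
  have hinner : inner ℝ (x - p) (p - y) = (0 : ℝ) := by
    rw [PiLp.inner_apply]
    have heq : ∀ j, inner ℝ ((x - p) j) ((p - y) j) = c * (p j - y j) := by
      intro j
      simp only [RCLike.inner_apply, conj_trivial, PiLp.sub_apply, hp, PiLp.toLp_apply]
      ring
    rw [Finset.sum_congr rfl fun j _ => heq j, ← Finset.mul_sum,
      Finset.sum_sub_distrib, hpsum, hy.1.2, sub_self, mul_zero]
  have hle := hy.2 p hpmem
  have hsplit : x - y = (x - p) + (p - y) := by abel
  have hsq : ‖x - y‖ ^ 2 = ‖x - p‖ ^ 2 + ‖p - y‖ ^ 2 := by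
    rw [hsplit, norm_add_sq_real, hinner]
    ring
  have hzero : ‖p - y‖ = 0 := by
    nlinarith [norm_nonneg (x - y), norm_nonneg (x - p), norm_nonneg (p - y)]
  have hpy : p = y := by
    have := norm_eq_zero.mp hzero
    exact sub_eq_zero.mp this
  intro i
  rw [← hpy]
end

section
/- Let n ≥ 1, let k be an integer with 1 ≤ k ≤ n, let τ > 0, and let y ∈ ℝ^n. Suppose x ∈ ℝ^n satisfies 0 < x_i/τ − c < 1 for every index i, where c = (∑_{i=1}^n x_i/τ − k)/n. Then the HyperSimplex loss L(x) = ½·‖Π_{Δ^n_k}(x/τ) − y‖₂² is differentiable at x, and its gradient is given coordinatewise by (∇L(x))_i = (1/τ)·[(ŷ_i − y_i) − (1/n)·∑_{j=1}^n (ŷ_j − y_j)], where ŷ = Π_{Δ^n_k}(x/τ). -/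
open scoped BigOperators RealInnerProductSpace

/-- The linear part of the local formula for the projection. -/
noncomputable def hsB (n : ℕ) (τ : ℝ) :
    EuclideanSpace ℝ (Fin n) →L[ℝ] EuclideanSpace ℝ (Fin n) :=
  LinearMap.toContinuousLinearMap
  { toFun := fun z => (WithLp.toLp 2 (fun i => τ⁻¹ * z i - (τ⁻¹ / (n : ℝ)) * ∑ j, z j) :
      EuclideanSpace ℝ (Fin n))
    map_add' := by
      intro a b
      ext i
      simp only [PiLp.toLp_apply, PiLp.add_apply, Finset.sum_add_distrib]
      ring
    map_smul' := by
      intro c a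
      ext i
      simp only [PiLp.toLp_apply, PiLp.smul_apply, smul_eq_mul, RingHom.id_apply, ← Finset.mul_sum]
      ring }

lemma hsB_apply (n : ℕ) (τ : ℝ) (z : EuclideanSpace ℝ (Fin n)) (i : Fin n) :
    hsB n τ z i = τ⁻¹ * z i - (τ⁻¹ / (n : ℝ)) * ∑ j, z j := rfl

/-- If `q` is in the hypersimplex and `z - q` is a constant vector, then the
projection of `z` onto the hypersimplex is `q`. -/
lemma proj_eq_of_const_diff (n : ℕ) (k : ℝ)
    (P : EuclideanSpace ℝ (Fin n) → EuclideanSpace ℝ (Fin n))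
    (hP : ∀ z, P z ∈ hypersimplex n k ∧
      ∀ w ∈ hypersimplex n k, ‖z - P z‖ ≤ ‖z - w‖)
    (z q : EuclideanSpace ℝ (Fin n)) (hq : q ∈ hypersimplex n k)
    (c : ℝ) (hc : ∀ i, z i - q i = c) : P z = q := by
  obtain ⟨hPmem, hPmin⟩ := hP z
  have hle : ‖z - P z‖ ≤ ‖z - q‖ := hPmin q hq
  have horth : inner ℝ (z - q) (q - P z) = (0 : ℝ) := by
    simp only [PiLp.inner_apply, RCLike.inner_apply, conj_trivial, PiLp.sub_apply]
    have : ∀ i ∈ Finset.univ, (z i - q i) * (q i - P z i) = c * (q i - P z i) := by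
      intro i _; rw [hc i]
    rw [Finset.sum_congr rfl fun i _ => mul_comm (q i - P z i) (z i - q i)]
    rw [Finset.sum_congr rfl this, ← Finset.mul_sum, Finset.sum_sub_distrib,
      hq.2, hPmem.2, sub_self, mul_zero]
  have hdecomp : z - P z = (z - q) + (q - P z) := by abel
  have hsq : ‖z - P z‖ ^ 2 = ‖z - q‖ ^ 2 + ‖q - P z‖ ^ 2 := by
    rw [hdecomp, norm_add_sq_real, horth]; ring
  have h1 : ‖z - P z‖ ^ 2 ≤ ‖z - q‖ ^ 2 := by
    apply sq_le_sq' <;> nlinarith [norm_nonneg (z - P z), norm_nonneg (z - q)]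
  have : ‖q - P z‖ ^ 2 ≤ 0 := by linarith
  have : ‖q - P z‖ = 0 := by nlinarith [norm_nonneg (q - P z)]
  have := norm_eq_zero.mp this
  have : q = P z := by rwa [sub_eq_zero] at this
  exact this.symm

/-- Suppose all the coordinates of x/τ shifted by c = (∑ x_j/τ − k)/n lie strictly in
(0,1).  Then the HyperSimplex loss L(x) = ½‖Π_{Δ^n_k}(x/τ) − y‖² is differentiable
at x with gradient g given coordinatewise by
g_i = (1/τ)·[(ŷ_i − y_i) − (1/n)·∑_j (ŷ_j − y_j)] where ŷ = Π_{Δ^n_k}(x/τ).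
Here P is the Euclidean projection onto the hypersimplex. -/
theorem hypersimplex_loss_gradient (n : ℕ) (hn : 1 ≤ n) (k : ℕ)
    (hk1 : 1 ≤ k) (hk2 : k ≤ n) (τ : ℝ) (hτ : 0 < τ)
    (y x : EuclideanSpace ℝ (Fin n))
    (P : EuclideanSpace ℝ (Fin n) → EuclideanSpace ℝ (Fin n))
    (hP : ∀ z, P z ∈ hypersimplex n (k : ℝ) ∧
      ∀ w ∈ hypersimplex n (k : ℝ), ‖z - P z‖ ≤ ‖z - w‖)
    (hx : ∀ i, 0 < τ⁻¹ * x i - (∑ j, τ⁻¹ * x j - (k : ℝ)) / (n : ℝ) ∧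
      τ⁻¹ * x i - (∑ j, τ⁻¹ * x j - (k : ℝ)) / (n : ℝ) < 1)
    (g : EuclideanSpace ℝ (Fin n))
    (hg : ∀ i, g i = (1 / τ) * ((P (τ⁻¹ • x) i - y i) -
      (1 / (n : ℝ)) * ∑ j, (P (τ⁻¹ • x) j - y j))) :
    DifferentiableAt ℝ (fun z => (1 / 2 : ℝ) * ‖P (τ⁻¹ • z) - y‖ ^ 2) x ∧
    HasGradientAt (fun z => (1 / 2 : ℝ) * ‖P (τ⁻¹ • z) - y‖ ^ 2) g x := by
  classical
  have hn0 : (n : ℝ) ≠ 0 := Nat.cast_ne_zero.mpr (by omega)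
  -- the candidate projection
  set cf : EuclideanSpace ℝ (Fin n) → ℝ :=
    fun z => (∑ j, τ⁻¹ * z j - (k : ℝ)) / (n : ℝ) with hcf
  set q : EuclideanSpace ℝ (Fin n) → EuclideanSpace ℝ (Fin n) :=
    fun z => (WithLp.toLp 2 (fun i => τ⁻¹ * z i - cf z) : EuclideanSpace ℝ (Fin n)) with hq
  -- on the good set, q z is the projection of τ⁻¹ • z
  have hproj : ∀ z : EuclideanSpace ℝ (Fin n),
      (∀ i, 0 < τ⁻¹ * z i - cf z ∧ τ⁻¹ * z i - cf z < 1) →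
      P (τ⁻¹ • z) = q z := by
    intro z hz
    apply proj_eq_of_const_diff n (k : ℝ) P hP
    · constructor
      · exact fun i => ⟨(hz i).1.le, (hz i).2.le⟩
      · have : ∑ i, (q z) i = ∑ i, (τ⁻¹ * z i) - n * cf z := by
          simp [hq, Finset.sum_sub_distrib, mul_comm]
        rw [this, hcf]
        field_simp
        ring
    · intro i
      show (τ⁻¹ • z) i - q z i = cf z
      simp [hq, PiLp.smul_apply, smul_eq_mul]
  -- the good set is open and contains x
  set U : Set (EuclideanSpace ℝ (Fin n)) :=
    {z | ∀ i, 0 < τ⁻¹ * z i - cf z ∧ τ⁻¹ * z i - cf z < 1} with hU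
  have hcont : ∀ i : Fin n,
      Continuous fun z : EuclideanSpace ℝ (Fin n) => τ⁻¹ * z i - cf z := by
    intro i
    apply Continuous.sub
    · exact continuous_const.mul (EuclideanSpace.proj i).continuous
    · apply Continuous.div_const
      apply Continuous.sub _ continuous_const
      exact continuous_finset_sum _ fun j _ =>
        continuous_const.mul (EuclideanSpace.proj j).continuous
  have hUopen : IsOpen U := by
    have : U = ⋂ i, ({z | 0 < τ⁻¹ * z i - cf z} ∩ {z | τ⁻¹ * z i - cf z < 1}) := by
      ext z; simp [hU, forall_and, Set.mem_iInter]
    rw [this]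
    exact isOpen_iInter_of_finite fun i =>
      (isOpen_lt continuous_const (hcont i)).inter (isOpen_lt (hcont i) continuous_const)
  have hxU : x ∈ U := hx
  -- the smooth local model
  set v : EuclideanSpace ℝ (Fin n) :=
    (WithLp.toLp 2 (fun i => (k : ℝ) / n - y i) : EuclideanSpace ℝ (Fin n)) with hv
  have hqv : ∀ z : EuclideanSpace ℝ (Fin n), q z - y = hsB n τ z + v := by
    intro z
    ext i
    simp only [PiLp.toLp_apply, PiLp.sub_apply, PiLp.add_apply, hsB_apply, hq, hv, hcf, ← Finset.mul_sum]
    field_simp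
    ring
  set h : EuclideanSpace ℝ (Fin n) → ℝ :=
    fun z => (1 / 2 : ℝ) * ‖hsB n τ z + v‖ ^ 2 with hh
  have heq : (fun z => (1 / 2 : ℝ) * ‖P (τ⁻¹ • z) - y‖ ^ 2) =ᶠ[nhds x] h := by
    filter_upwards [hUopen.mem_nhds hxU] with z hz
    rw [hproj z hz, hqv z]
  -- gradient of the local model
  have hfd : HasFDerivAt h
      ((1 / 2 : ℝ) • (2 • (innerSL ℝ (hsB n τ x + v)).comp (hsB n τ))) x := by
    exact (((hsB n τ).hasFDerivAt.add_const v).norm_sq).const_mul (1 / 2 : ℝ)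
  have hu : hsB n τ x + v = P (τ⁻¹ • x) - y := by
    rw [hproj x hx, hqv x]
  have hL : ((1 / 2 : ℝ) • (2 • (innerSL ℝ (hsB n τ x + v)).comp (hsB n τ)))
      = InnerProductSpace.toDual ℝ (EuclideanSpace ℝ (Fin n)) g := by
    ext1 d
    rw [hu]
    simp only [ContinuousLinearMap.smul_apply, ContinuousLinearMap.comp_apply,
      innerSL_apply_apply, InnerProductSpace.toDual_apply_apply, smul_eq_mul]
    simp only [nsmul_eq_mul, Nat.cast_ofNat, PiLp.inner_apply,
      RCLike.inner_apply, conj_trivial, PiLp.sub_apply]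
    rw [Finset.sum_congr rfl fun i _ => mul_comm (hsB n τ d i) (P (τ⁻¹ • x) i - y i),
      Finset.sum_congr rfl fun i _ => mul_comm (d i) (g i)]
    have hgd : ∀ i, g i * d i = τ⁻¹ * ((P (τ⁻¹ • x) i - y i) * d i)
        - τ⁻¹ / n * ((∑ j, (P (τ⁻¹ • x) j - y j)) * d i) := by
      intro i; rw [hg i]; field_simp
    have hlhs : ∀ i, (P (τ⁻¹ • x) i - y i) * hsB n τ d i
        = τ⁻¹ * ((P (τ⁻¹ • x) i - y i) * d i)
          - τ⁻¹ / n * ((P (τ⁻¹ • x) i - y i) * ∑ j, d j) := by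
      intro i; rw [hsB_apply]; ring
    rw [Finset.sum_congr rfl fun i _ => hgd i,
      Finset.sum_congr rfl fun i _ => hlhs i]
    simp only [Finset.sum_sub_distrib, ← Finset.mul_sum, ← Finset.sum_mul]
    ring
  have hgrad : HasGradientAt h g x := by
    rw [hasGradientAt_iff_hasFDerivAt]
    exact hL ▸ hfd
  have hmain : HasGradientAt (fun z => (1 / 2 : ℝ) * ‖P (τ⁻¹ • z) - y‖ ^ 2) g x :=
    hgrad.congr_of_eventuallyEq heq
  exact ⟨hmain.differentiableAt, hmain⟩
end
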